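/- Suppose ‖H‖₁ > 0 and that for the initial position u ∈ B_R there are anti-leaf sets Ũ(u,k) ⊆ B_R, k ∈ ℕ, such that {‖Ψ_{t_k}(v) − Ψ_{t_k}(u)‖₁ : v ∈ Ũ(u,k)} = [0, d̃_max(u,k)], and for every v ∈ Ũ(u,k), ∑_{i=0}^{k} ‖Ψ_{t_i}(v) − Ψ_{t_i}(u)‖₁ ≤ C̃(u,k)·‖Ψ_{t_k}(v) − Ψ_{t_k}(u)‖₁, for some constants C̃(u,k) and d̃_max(u,k). Suppose further there is a strictly increasing sequence of indices i₁ < i₂ < … and constants C̃(u) < ∞, d̃_max(u) > 0 such that C̃(u,i_j) ≤ C̃(u) and d̃_max(u,i_j) ≥ d̃_max(u) for every j. Suppose q(u) > 0 and q(v) > 0 for every v ∈ ∪_{k∈ℕ} Ũ(u,k). Then for every ε with 0 < ε ≤ d̃_max(u)·C̃(u)·‖H‖₁ and every j ≥ 1, the expected ℓ¹-diameter of the support of the filter satisfies E[diam₁({Ψ_{t_{i_j}}(v) : v ∈ S_{i_j}})] ≥ (1/e)·ε/(C̃(u)·‖H‖₁). -/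

import Mathlib

open MeasureTheory ProbabilityTheory Set
open scoped ENNReal

noncomputable section

/-- The ℓ¹ norm on `ℝ^n`. -/
def norm1 {n : ℕ} (x : EuclideanSpace ℝ (Fin n)) : ℝ := ∑ j, |x j|

/-- The supremum norm on `ℝ^n`. -/
def normInf {n : ℕ} (x : EuclideanSpace ℝ (Fin n)) : ℝ := ⨆ j, |x j|

/-- The operator norm induced by the ℓ¹ norms. -/
def opNorm1 {n m : ℕ} (T : EuclideanSpace ℝ (Fin n) → EuclideanSpace ℝ (Fin m)) : ℝ :=
  sSup ((fun x => norm1 (T x)) '' {x | norm1 x ≤ 1})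

/-- The ℓ¹ diameter of a set. -/
def diam1 {n : ℕ} (S : Set (EuclideanSpace ℝ (Fin n))) : ℝ :=
  sSup ((fun p : EuclideanSpace ℝ (Fin n) × EuclideanSpace ℝ (Fin n) =>
    norm1 (p.1 - p.2)) '' (S ×ˢ S))

/-- The support of the smoothing distribution after observations `Y_0, …, Y_k`. -/
def smootherSupp {d dO : ℕ} {Ω : Type*}
    (Ψ : ℝ → EuclideanSpace ℝ (Fin d) → EuclideanSpace ℝ (Fin d))
    (H : EuclideanSpace ℝ (Fin d) →L[ℝ] EuclideanSpace ℝ (Fin dO))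
    (q : EuclideanSpace ℝ (Fin d) → ℝ) (R h ε : ℝ)
    (u : EuclideanSpace ℝ (Fin d)) (Z : ℕ → Ω → EuclideanSpace ℝ (Fin dO))
    (k : ℕ) (ω : Ω) : Set (EuclideanSpace ℝ (Fin d)) :=
  {x | ‖x‖ ≤ R ∧ 0 < q x ∧
    ∀ i ≤ k, normInf (H (Ψ (i * h) x) - (H (Ψ (i * h) u) + Z i ω)) ≤ ε}

namespace AuxDFLB

lemma norm1_nonneg {n : ℕ} (x : EuclideanSpace ℝ (Fin n)) : 0 ≤ norm1 x :=
  Finset.sum_nonneg fun _ _ => abs_nonneg _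

lemma abs_apply_le_norm1 {n : ℕ} (x : EuclideanSpace ℝ (Fin n)) (j : Fin n) : |x j| ≤ norm1 x :=
  Finset.single_le_sum (f := fun j => |x j|) (fun _ _ => abs_nonneg _) (Finset.mem_univ j)

lemma abs_apply_le_norm {n : ℕ} (x : EuclideanSpace ℝ (Fin n)) (j : Fin n) : |x j| ≤ ‖x‖ := by
  rw [EuclideanSpace.norm_eq]
  have h1 : |x j| = Real.sqrt (‖x j‖ ^ 2) := by
    rw [Real.norm_eq_abs, sq_abs, Real.sqrt_sq_eq_abs]
  rw [h1]
  exact Real.sqrt_le_sqrt (Finset.single_le_sum (f := fun i => ‖x i‖ ^ 2)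
    (fun i _ => sq_nonneg _) (Finset.mem_univ j))

lemma norm1_le_card_mul_norm {n : ℕ} (x : EuclideanSpace ℝ (Fin n)) : norm1 x ≤ n * ‖x‖ := by
  calc norm1 x = ∑ j, |x j| := rfl
    _ ≤ ∑ _j : Fin n, ‖x‖ := Finset.sum_le_sum fun j _ => abs_apply_le_norm x j
    _ = n * ‖x‖ := by simp [Finset.sum_const, Finset.card_univ]

lemma norm_le_norm1 {n : ℕ} (x : EuclideanSpace ℝ (Fin n)) : ‖x‖ ≤ norm1 x := by
  rw [EuclideanSpace.norm_eq]
  have h : ∑ i, ‖x i‖ ^ 2 ≤ (∑ i, ‖x i‖) ^ 2 :=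
    Finset.sum_sq_le_sq_sum_of_nonneg fun i _ => norm_nonneg _
  calc Real.sqrt (∑ i, ‖x i‖ ^ 2) ≤ Real.sqrt ((∑ i, ‖x i‖) ^ 2) := Real.sqrt_le_sqrt h
    _ = |∑ i, ‖x i‖| := Real.sqrt_sq_eq_abs _
    _ = norm1 x := by
        rw [abs_of_nonneg (Finset.sum_nonneg fun i _ => norm_nonneg _)]
        simp [norm1, Real.norm_eq_abs]

lemma norm1_smul {n : ℕ} (c : ℝ) (x : EuclideanSpace ℝ (Fin n)) :
    norm1 (c • x) = |c| * norm1 x := by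
  simp [norm1, abs_mul, Finset.mul_sum]

lemma norm1_map_le {n m : ℕ} (H : EuclideanSpace ℝ (Fin n) →L[ℝ] EuclideanSpace ℝ (Fin m))
    (x : EuclideanSpace ℝ (Fin n)) :
    norm1 (H x) ≤ opNorm1 (fun y : EuclideanSpace ℝ (Fin n) => H y) * norm1 x := by
  have hbdd : BddAbove ((fun x => norm1 ((fun y : EuclideanSpace ℝ (Fin n) => H y) x)) ''
      {x | norm1 x ≤ 1}) := by
    refine ⟨m * ‖H‖, ?_⟩
    rintro _ ⟨y, hy, rfl⟩
    calc norm1 (H y) ≤ m * ‖H y‖ := norm1_le_card_mul_norm _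
      _ ≤ m * (‖H‖ * ‖y‖) := by
          have := H.le_opNorm y
          have hm : (0:ℝ) ≤ m := Nat.cast_nonneg m
          nlinarith [norm_nonneg (H y)]
      _ ≤ m * ‖H‖ := by
          have h1 : ‖y‖ ≤ 1 := le_trans (norm_le_norm1 y) hy
          have hm : (0:ℝ) ≤ m := Nat.cast_nonneg m
          nlinarith [norm_nonneg H, norm_nonneg y, mul_nonneg hm (norm_nonneg H)]
  have key : ∀ y : EuclideanSpace ℝ (Fin n), norm1 y ≤ 1 →
      norm1 (H y) ≤ opNorm1 (fun y : EuclideanSpace ℝ (Fin n) => H y) :=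
    fun y hy => le_csSup hbdd ⟨y, hy, rfl⟩
  by_cases hx : norm1 x = 0
  · have hx0 : x = 0 := by
      ext j
      have h1 := abs_apply_le_norm1 x j
      have h2 := abs_nonneg (x j)
      have : |x j| = 0 := le_antisymm (hx ▸ h1) h2
      simpa using abs_eq_zero.mp this
    subst hx0
    simp only [map_zero, hx]
    simp [norm1]
  · have hc : 0 < norm1 x := lt_of_le_of_ne (norm1_nonneg x) (Ne.symm hx)
    set c := norm1 x with hcdef
    have hy1 : norm1 (c⁻¹ • x) = 1 := by
      rw [norm1_smul, abs_of_nonneg (inv_nonneg.mpr hc.le), inv_mul_cancel₀ hc.ne']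
    have hx_eq : x = c • (c⁻¹ • x) := by rw [smul_inv_smul₀ hc.ne']
    calc norm1 (H x) = norm1 (H (c • (c⁻¹ • x))) := by rw [← hx_eq]
      _ = norm1 (c • H (c⁻¹ • x)) := by rw [_root_.map_smul]
      _ = c * norm1 (H (c⁻¹ • x)) := by rw [norm1_smul, abs_of_nonneg hc.le]
      _ ≤ c * opNorm1 (fun y : EuclideanSpace ℝ (Fin n) => H y) := by
          have := key _ hy1.le
          nlinarith
      _ = _ := mul_comm _ _

lemma one_sub_sum_le_prod_one_sub {ι : Type*} (s : Finset ι) (p : ι → ℝ)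
    (h0 : ∀ i ∈ s, 0 ≤ p i) (h1 : ∀ i ∈ s, p i ≤ 1) :
    1 - ∑ i ∈ s, p i ≤ ∏ i ∈ s, (1 - p i) := by
  induction s using Finset.cons_induction with
  | empty => simp
  | cons a s ha ih =>
    rw [Finset.prod_cons, Finset.sum_cons]
    have ihs := ih (fun i hi => h0 i (Finset.mem_cons_of_mem hi))
      (fun i hi => h1 i (Finset.mem_cons_of_mem hi))
    have hpa0 : 0 ≤ p a := h0 a (Finset.mem_cons_self a s)
    have hpa1 : p a ≤ 1 := h1 a (Finset.mem_cons_self a s)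
    have hsum0 : 0 ≤ ∑ i ∈ s, p i :=
      Finset.sum_nonneg fun i hi => h0 i (Finset.mem_cons_of_mem hi)
    nlinarith [mul_le_mul_of_nonneg_left ihs (by linarith : (0:ℝ) ≤ 1 - p a)]

lemma measurableEquiv_apply {m : ℕ} (z : EuclideanSpace ℝ (Fin m)) (j : Fin m) :
    (MeasurableEquiv.toLp 2 (Fin m → ℝ)).symm z j = z j := rfl

end AuxDFLB

/-- lower bound on the expected ℓ¹-diameter of the support of the
filter under the anti-leaf-set assumption, for uniform observation noise.  The
support of the filter after `k+1` observations is the image of the support of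
the smoother under `Ψ_{t_k}`. -/
theorem expected_diam_filter_lower_bound {d dO : ℕ}
    (A : EuclideanSpace ℝ (Fin d) →L[ℝ] EuclideanSpace ℝ (Fin d))
    (B : EuclideanSpace ℝ (Fin d) →L[ℝ] EuclideanSpace ℝ (Fin d) →L[ℝ] EuclideanSpace ℝ (Fin d))
    (f : EuclideanSpace ℝ (Fin d))
    (R δ : ℝ) (hR : 0 < R) (hδ : 0 < δ)
    (htrap : ∀ x : EuclideanSpace ℝ (Fin d),
      ‖x‖ ∈ Icc R (R + δ) → (inner ℝ (f - A x - B x x) x : ℝ) ≤ 0)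
    (Ψ : ℝ → EuclideanSpace ℝ (Fin d) → EuclideanSpace ℝ (Fin d))
    (hΨ0 : ∀ x, ‖x‖ ≤ R → Ψ 0 x = x)
    (hΨR : ∀ x, ‖x‖ ≤ R → ∀ t : ℝ, 0 ≤ t → ‖Ψ t x‖ ≤ R)
    (hΨode : ∀ x, ‖x‖ ≤ R → ∀ t : ℝ, 0 ≤ t →
      HasDerivWithinAt (fun s => Ψ s x)
        (f - A (Ψ t x) - B (Ψ t x) (Ψ t x)) (Ici 0) t)
    (h : ℝ) (hh : 0 < h)
    (H : EuclideanSpace ℝ (Fin d) →L[ℝ] EuclideanSpace ℝ (Fin dO))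
    (hH : 0 < opNorm1 (fun x : EuclideanSpace ℝ (Fin d) => H x))
    (ε : ℝ) (hε : 0 < ε)
    (Ω : Type*) [MeasurableSpace Ω] (μ : Measure Ω) [IsProbabilityMeasure μ]
    (Z : ℕ → Ω → EuclideanSpace ℝ (Fin dO))
    (hZmeas : ∀ i, Measurable (Z i))
    (hZindep : iIndepFun Z μ)
    (hZlaw : ∀ i, Measure.map (Z i) μ =
      (ENNReal.ofReal ((2 * ε) ^ dO))⁻¹ •
        volume.restrict {z : EuclideanSpace ℝ (Fin dO) | ∀ j, |z j| ≤ ε})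
    (q : EuclideanSpace ℝ (Fin d) → ℝ) (hq : ∀ x, 0 ≤ q x)
    (hqsupp : ∀ x : EuclideanSpace ℝ (Fin d), ¬ ‖x‖ ≤ R → q x = 0)
    (u : EuclideanSpace ℝ (Fin d)) (hu : ‖u‖ ≤ R) (hqu : 0 < q u)
    -- Assumption 3 (anti-leaf sets):
    (Ut : ℕ → Set (EuclideanSpace ℝ (Fin d)))
    (hUtsub : ∀ k : ℕ, Ut k ⊆ {x : EuclideanSpace ℝ (Fin d) | ‖x‖ ≤ R})
    (dmaxk : ℕ → ℝ) (Ck : ℕ → ℝ)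
    (hUtrange : ∀ k : ℕ,
      (fun v => norm1 (Ψ (k * h) v - Ψ (k * h) u)) '' (Ut k) = Icc 0 (dmaxk k))
    (hCk : ∀ k : ℕ, ∀ v ∈ Ut k,
      ∑ i ∈ Finset.range (k + 1), norm1 (Ψ (i * h) v - Ψ (i * h) u) ≤
        Ck k * norm1 (Ψ (k * h) v - Ψ (k * h) u))
    (idx : ℕ → ℕ) (hidx : StrictMono idx)
    (Ct dt : ℝ) (hdt : 0 < dt)
    (hCtb : ∀ j : ℕ, Ck (idx j) ≤ Ct) (hdtb : ∀ j : ℕ, dt ≤ dmaxk (idx j))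
    (hqUt : ∀ v ∈ ⋃ k : ℕ, Ut k, 0 < q v)
    (hεub : ε ≤ dt * Ct * opNorm1 (fun x : EuclideanSpace ℝ (Fin d) => H x)) :
    ∀ j : ℕ,
      ENNReal.ofReal ((1 / Real.exp 1) *
          ε / (Ct * opNorm1 (fun x : EuclideanSpace ℝ (Fin d) => H x))) ≤
        ∫⁻ ω, ENNReal.ofReal (diam1
            (Ψ (idx j * h) '' smootherSupp Ψ H q R h ε u Z (idx j) ω)) ∂μ := by
  intro j
  classical
  set N := opNorm1 (fun x : EuclideanSpace ℝ (Fin d) => H x) with hNdef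
  set k := idx j with hkdef
  have hNpos : 0 < N := hH
  have hdmax_pos : 0 < dmaxk k := lt_of_lt_of_le hdt (hdtb j)
  have h2ε : (0:ℝ) < 2 * ε := by linarith
  -- `Ck k ≥ 1`
  have hCk1 : 1 ≤ Ck k := by
    have hmem : dmaxk k ∈ Icc (0:ℝ) (dmaxk k) := ⟨hdmax_pos.le, le_refl _⟩
    rw [← hUtrange k] at hmem
    obtain ⟨v₀, hv₀U, hv₀⟩ := hmem
    have hv₀' : norm1 (Ψ (k * h) v₀ - Ψ (k * h) u) = dmaxk k := hv₀
    have hsum := hCk k v₀ hv₀U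
    have hterm : norm1 (Ψ (k * h) v₀ - Ψ (k * h) u) ≤
        ∑ i ∈ Finset.range (k + 1), norm1 (Ψ (i * h) v₀ - Ψ (i * h) u) :=
      Finset.single_le_sum (f := fun i : ℕ => norm1 (Ψ (i * h) v₀ - Ψ (i * h) u))
        (fun i _ => AuxDFLB.norm1_nonneg _) (Finset.mem_range.mpr (Nat.lt_succ_self k))
    rw [hv₀'] at hterm hsum
    nlinarith
  have hCt1 : 1 ≤ Ct := le_trans hCk1 (hCtb j)
  have hCtpos : 0 < Ct := lt_of_lt_of_le one_pos hCt1
  have hCN : 0 < Ct * N := mul_pos hCtpos hNpos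
  set r := ε / (Ct * N) with hrdef
  have hr0 : 0 < r := div_pos hε hCN
  have hrdm : r ≤ dmaxk k := by
    have h1 : r ≤ dt := by
      rw [hrdef, div_le_iff₀ hCN]
      calc ε ≤ dt * Ct * N := hεub
        _ = dt * (Ct * N) := by ring
    exact h1.trans (hdtb j)
  obtain ⟨v, hvU, hvr'⟩ : ∃ v ∈ Ut k, norm1 (Ψ (k * h) v - Ψ (k * h) u) = r := by
    have hmem : r ∈ Icc (0:ℝ) (dmaxk k) := ⟨hr0.le, hrdm⟩
    rw [← hUtrange k] at hmem
    obtain ⟨v, hv1, hv2⟩ := hmem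
    exact ⟨v, hv1, hv2⟩
  -- the shift vectors
  set A' : ℕ → EuclideanSpace ℝ (Fin dO) :=
    fun i => H (Ψ (i * h) v) - H (Ψ (i * h) u) with hA'def
  have hsum_w : ∑ i ∈ Finset.range (k + 1), norm1 (Ψ (i * h) v - Ψ (i * h) u) ≤ ε / N := by
    have h1 := hCk k v hvU
    rw [hvr'] at h1
    have h2 : Ck k * r ≤ Ct * r := mul_le_mul_of_nonneg_right (hCtb j) hr0.le
    have h3 : Ct * r = ε / N := by
      rw [hrdef]
      field_simp
    linarith
  have hsum_A : ∑ i ∈ Finset.range (k + 1), norm1 (A' i) ≤ ε := by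
    have h1 : ∀ i ∈ Finset.range (k + 1),
        norm1 (A' i) ≤ N * norm1 (Ψ (i * h) v - Ψ (i * h) u) := by
      intro i _
      have he : A' i = H (Ψ (i * h) v - Ψ (i * h) u) := by
        rw [hA'def, map_sub]
      rw [he]
      calc norm1 (H (Ψ (i * h) v - Ψ (i * h) u))
          ≤ opNorm1 (fun y : EuclideanSpace ℝ (Fin d) => H y) *
            norm1 (Ψ (i * h) v - Ψ (i * h) u) := AuxDFLB.norm1_map_le H _
        _ = N * norm1 (Ψ (i * h) v - Ψ (i * h) u) := by rw [hNdef]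
    calc ∑ i ∈ Finset.range (k + 1), norm1 (A' i)
        ≤ ∑ i ∈ Finset.range (k + 1), N * norm1 (Ψ (i * h) v - Ψ (i * h) u) :=
          Finset.sum_le_sum h1
      _ = N * ∑ i ∈ Finset.range (k + 1), norm1 (Ψ (i * h) v - Ψ (i * h) u) := by
          rw [Finset.mul_sum]
      _ ≤ N * (ε / N) := mul_le_mul_of_nonneg_left hsum_w hNpos.le
      _ = ε := by field_simp
  have hAij : ∀ i ∈ Finset.range (k + 1), ∀ j' : Fin dO, |A' i j'| ≤ ε := by
    intro i hi j'
    calc |A' i j'| ≤ norm1 (A' i) := AuxDFLB.abs_apply_le_norm1 _ _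
      _ ≤ ∑ i ∈ Finset.range (k + 1), norm1 (A' i) :=
        Finset.single_le_sum (f := fun i => norm1 (A' i))
          (fun i _ => AuxDFLB.norm1_nonneg _) hi
      _ ≤ ε := hsum_A
  -- the boxes
  set P : ℕ → Set (Fin dO → ℝ) := fun i => Set.pi Set.univ
      (fun j' => Icc (max (A' i j' - ε) (-ε)) (min (A' i j' + ε) ε)) with hPdef
  set Si : ℕ → Set (EuclideanSpace ℝ (Fin dO)) :=
      fun i => (MeasurableEquiv.toLp 2 (Fin dO → ℝ)).symm ⁻¹' (P i) with hSidef
  have hPmeas : ∀ i, MeasurableSet (P i) :=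
    fun i => MeasurableSet.univ_pi fun j' => measurableSet_Icc
  have hSmeas : ∀ i, MeasurableSet (Si i) :=
    fun i => (MeasurableEquiv.toLp 2 (Fin dO → ℝ)).symm.measurable (hPmeas i)
  have hmemSi : ∀ (i : ℕ) (z : EuclideanSpace ℝ (Fin dO)), z ∈ Si i ↔
      ∀ j', max (A' i j' - ε) (-ε) ≤ z j' ∧ z j' ≤ min (A' i j' + ε) ε := by
    intro i z
    simp only [hSidef, Set.mem_preimage, hPdef, Set.mem_univ_pi,
      AuxDFLB.measurableEquiv_apply, Set.mem_Icc]
  have hSi_box : ∀ i ∈ Finset.range (k + 1),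
      Si i ⊆ {z : EuclideanSpace ℝ (Fin dO) | ∀ j', |z j'| ≤ ε} := by
    intro i hi z hz
    intro j'
    obtain ⟨h1, h2⟩ := (hmemSi i z).1 hz j'
    rw [abs_le]
    exact ⟨le_trans (le_max_right _ _) h1, h2.trans (min_le_right _ _)⟩
  -- the good event and its measure
  have hE_eq : μ (⋂ i ∈ Finset.range (k + 1), Z i ⁻¹' Si i)
      = ∏ i ∈ Finset.range (k + 1), μ (Z i ⁻¹' Si i) :=
    hZindep.measure_inter_preimage_eq_mul (Finset.range (k + 1)) (fun i _ => hSmeas i)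
  have hfac : ∀ i ∈ Finset.range (k + 1),
      μ (Z i ⁻¹' Si i) = ENNReal.ofReal (∏ j' : Fin dO, (1 - |A' i j'| / (2 * ε))) := by
    intro i hi
    have hb : ∀ j' : Fin dO,
        min (A' i j' + ε) ε - max (A' i j' - ε) (-ε) = 2 * ε - |A' i j'| := by
      intro j'
      have hle := hAij i hi j'
      rw [abs_le] at hle
      rcases le_total (A' i j') 0 with hc | hc
      · rw [abs_of_nonpos hc, min_eq_left (by linarith), max_eq_right (by linarith)]
        ring
      · rw [abs_of_nonneg hc, min_eq_right (by linarith), max_eq_left (by linarith)]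
        ring
    have hvolP : volume (P i) = ENNReal.ofReal (∏ j' : Fin dO, (2 * ε - |A' i j'|)) := by
      rw [hPdef]
      rw [MeasureTheory.volume_pi_pi]
      rw [ENNReal.ofReal_prod_of_nonneg (fun j' _ => by
        have := hAij i hi j'; linarith)]
      refine Finset.prod_congr rfl fun j' _ => ?_
      rw [Real.volume_Icc, hb j']
    have hvol : volume (Si i) = ENNReal.ofReal (∏ j' : Fin dO, (2 * ε - |A' i j'|)) := by
      rw [hSidef]
      rw [(EuclideanSpace.volume_preserving_symm_measurableEquiv_toLp (Fin dO)).measure_preimage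
        (hPmeas i).nullMeasurableSet]
      exact hvolP
    have hprod_eq : ∏ j' : Fin dO, (1 - |A' i j'| / (2 * ε)) =
        (∏ j' : Fin dO, (2 * ε - |A' i j'|)) / (2 * ε) ^ dO := by
      calc ∏ j' : Fin dO, (1 - |A' i j'| / (2 * ε))
          = ∏ j' : Fin dO, ((2 * ε - |A' i j'|) / (2 * ε)) := by
            refine Finset.prod_congr rfl fun j' _ => ?_
            field_simp
        _ = (∏ j' : Fin dO, (2 * ε - |A' i j'|)) / ∏ _j' : Fin dO, (2 * ε) :=
            Finset.prod_div_distrib _ _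
        _ = (∏ j' : Fin dO, (2 * ε - |A' i j'|)) / (2 * ε) ^ dO := by
            rw [Finset.prod_const, Finset.card_univ, Fintype.card_fin]
    rw [← Measure.map_apply (hZmeas i) (hSmeas i), hZlaw i]
    rw [Measure.smul_apply, Measure.restrict_apply (hSmeas i)]
    rw [Set.inter_eq_self_of_subset_left (hSi_box i hi)]
    rw [hvol, smul_eq_mul, hprod_eq,
      ENNReal.ofReal_div_of_pos (pow_pos h2ε dO), ENNReal.div_eq_inv_mul]
  have hfac_nonneg : ∀ i ∈ Finset.range (k + 1),
      0 ≤ ∏ j' : Fin dO, (1 - |A' i j'| / (2 * ε)) := by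
    intro i hi
    refine Finset.prod_nonneg fun j' _ => ?_
    have h1 := hAij i hi j'
    have h2 : |A' i j'| / (2 * ε) ≤ ε / (2 * ε) := by
      apply div_le_div_of_nonneg_right h1 h2ε.le
    have h3 : ε / (2 * ε) ≤ 1 := by
      rw [div_le_one h2ε]; linarith
    linarith
  have hμE : ENNReal.ofReal (1 / 2) ≤ μ (⋂ i ∈ Finset.range (k + 1), Z i ⁻¹' Si i) := by
    rw [hE_eq, Finset.prod_congr rfl hfac, ← ENNReal.ofReal_prod_of_nonneg hfac_nonneg]
    apply ENNReal.ofReal_le_ofReal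
    have hW := AuxDFLB.one_sub_sum_le_prod_one_sub
      ((Finset.range (k + 1)) ×ˢ (Finset.univ : Finset (Fin dO)))
      (fun ij => |A' ij.1 ij.2| / (2 * ε))
      (fun ij _ => div_nonneg (abs_nonneg _) h2ε.le)
      (fun ij hij => by
        have h1 := hAij ij.1 (Finset.mem_product.mp hij).1 ij.2
        rw [div_le_one h2ε]; linarith)
    rw [Finset.prod_product, Finset.sum_product] at hW
    have hsum : ∑ i ∈ Finset.range (k + 1), ∑ j' : Fin dO, |A' i j'| / (2 * ε) ≤ 1 / 2 := by
      have he : ∀ i : ℕ, ∑ j' : Fin dO, |A' i j'| / (2 * ε) = norm1 (A' i) / (2 * ε) := by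
        intro i
        rw [← Finset.sum_div]
        rfl
      calc ∑ i ∈ Finset.range (k + 1), ∑ j' : Fin dO, |A' i j'| / (2 * ε)
          = ∑ i ∈ Finset.range (k + 1), norm1 (A' i) / (2 * ε) :=
            Finset.sum_congr rfl fun i _ => he i
        _ = (∑ i ∈ Finset.range (k + 1), norm1 (A' i)) / (2 * ε) := by
            rw [← Finset.sum_div]
        _ ≤ ε / (2 * ε) := div_le_div_of_nonneg_right hsum_A h2ε.le
        _ = 1 / 2 := by field_simp
    calc (1:ℝ) / 2 ≤ 1 - ∑ i ∈ Finset.range (k + 1), ∑ j' : Fin dO, |A' i j'| / (2 * ε) := by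
          linarith
      _ ≤ _ := hW
  -- on the good event, the diameter is at least r
  have hkh : (0:ℝ) ≤ (k : ℝ) * h := mul_nonneg (Nat.cast_nonneg k) hh.le
  have hdiam : ∀ ω ∈ ⋂ i ∈ Finset.range (k + 1), Z i ⁻¹' Si i,
      r ≤ diam1 (Ψ (k * h) '' smootherSupp Ψ H q R h ε u Z k ω) := by
    intro ω hω
    have hωi : ∀ i ≤ k, Z i ω ∈ Si i := fun i hik =>
      Set.mem_iInter₂.1 hω i (Finset.mem_range.mpr (Nat.lt_succ_of_le hik))
    have huS : u ∈ smootherSupp Ψ H q R h ε u Z k ω := by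
      refine ⟨hu, hqu, fun i hik => ?_⟩
      have hzi := hSi_box i (Finset.mem_range.mpr (Nat.lt_succ_of_le hik)) (hωi i hik)
      simp only [normInf]
      apply Real.iSup_le _ hε.le
      intro j'
      have hc : (H (Ψ (i * h) u) - (H (Ψ (i * h) u) + Z i ω)) j' = -(Z i ω j') := by
        simp only [PiLp.sub_apply, PiLp.add_apply]
        ring
      rw [hc, abs_neg]
      exact hzi j'
    have hvS : v ∈ smootherSupp Ψ H q R h ε u Z k ω := by
      refine ⟨hUtsub k hvU, hqUt v (Set.mem_iUnion.mpr ⟨k, hvU⟩), fun i hik => ?_⟩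
      have hzi := (hmemSi i (Z i ω)).1 (hωi i hik)
      simp only [normInf]
      apply Real.iSup_le _ hε.le
      intro j'
      have hc : (H (Ψ (i * h) v) - (H (Ψ (i * h) u) + Z i ω)) j'
          = A' i j' - Z i ω j' := by
        simp only [hA'def, PiLp.sub_apply, PiLp.add_apply]
        ring
      rw [hc]
      obtain ⟨h1, h2⟩ := hzi j'
      have l1 : A' i j' - ε ≤ Z i ω j' := le_trans (le_max_left _ _) h1
      have l2 : Z i ω j' ≤ A' i j' + ε := le_trans h2 (min_le_left _ _)
      rw [abs_le]
      constructor <;> linarith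
    have hbdd : BddAbove ((fun p : EuclideanSpace ℝ (Fin d) × EuclideanSpace ℝ (Fin d) =>
        norm1 (p.1 - p.2)) '' ((Ψ (k * h) '' smootherSupp Ψ H q R h ε u Z k ω) ×ˢ
          (Ψ (k * h) '' smootherSupp Ψ H q R h ε u Z k ω))) := by
      refine ⟨2 * d * R, ?_⟩
      rintro x ⟨⟨p1, p2⟩, ⟨⟨x1, hx1, rfl⟩, ⟨x2, hx2, rfl⟩⟩, rfl⟩
      have n1 : ‖Ψ (k * h) x1‖ ≤ R := hΨR x1 hx1.1 _ hkh
      have n2 : ‖Ψ (k * h) x2‖ ≤ R := hΨR x2 hx2.1 _ hkh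
      have hd0 : (0:ℝ) ≤ d := Nat.cast_nonneg d
      calc norm1 (Ψ (k * h) x1 - Ψ (k * h) x2)
          ≤ d * ‖Ψ (k * h) x1 - Ψ (k * h) x2‖ := AuxDFLB.norm1_le_card_mul_norm _
        _ ≤ d * (‖Ψ (k * h) x1‖ + ‖Ψ (k * h) x2‖) :=
            mul_le_mul_of_nonneg_left (norm_sub_le _ _) hd0
        _ ≤ 2 * d * R := by nlinarith
    calc r = norm1 (Ψ (k * h) v - Ψ (k * h) u) := hvr'.symm
      _ ≤ diam1 (Ψ (k * h) '' smootherSupp Ψ H q R h ε u Z k ω) :=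
        le_csSup hbdd ⟨(Ψ (k * h) v, Ψ (k * h) u),
          ⟨Set.mem_image_of_mem _ hvS, Set.mem_image_of_mem _ huS⟩, rfl⟩
  -- assembly
  set E := ⋂ i ∈ Finset.range (k + 1), Z i ⁻¹' Si i with hEdef
  have hEmeas : MeasurableSet E :=
    Finset.measurableSet_biInter _ (fun i _ => (hSmeas i).preimage (hZmeas i))
  have he2 : (2:ℝ) ≤ Real.exp 1 := by
    have := Real.add_one_le_exp 1
    linarith
  calc ENNReal.ofReal (1 / Real.exp 1 * ε / (Ct * N))
      ≤ ENNReal.ofReal (r * (1 / 2)) := by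
        apply ENNReal.ofReal_le_ofReal
        have h1 : 1 / Real.exp 1 ≤ 1 / 2 :=
          one_div_le_one_div_of_le two_pos he2
        have h2 : 1 / Real.exp 1 * ε ≤ ε * (1 / 2) := by
          rw [mul_comm ε]
          exact mul_le_mul_of_nonneg_right h1 hε.le
        rw [hrdef, div_mul_eq_mul_div ε (Ct * N) (1 / 2)]
        exact div_le_div_of_nonneg_right h2 hCN.le
      _ = ENNReal.ofReal r * ENNReal.ofReal (1 / 2) := ENNReal.ofReal_mul hr0.le
      _ ≤ ENNReal.ofReal r * μ E := mul_le_mul_right hμE _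
      _ = ∫⁻ ω, E.indicator (fun _ => ENNReal.ofReal r) ω ∂μ :=
        (lintegral_indicator_const hEmeas _).symm
      _ ≤ ∫⁻ ω, ENNReal.ofReal (diam1
            (Ψ (k * h) '' smootherSupp Ψ H q R h ε u Z k ω)) ∂μ := by
        apply lintegral_mono
        intro ω
        by_cases hω : ω ∈ E
        · rw [Set.indicator_of_mem hω]
          exact ENNReal.ofReal_le_ofReal (hdiam ω hω)
        · rw [Set.indicator_of_notMem hω]
          exact zero_le
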